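/- In the survival setup, let ν : 𝒳 × ℝ → ℝ be a fixed measurable score function such that for every x ∈ 𝒳 the map t ↦ ν(x, t) is nonincreasing, and let α ∈ (0,1). Let q̂ be the ⌈(1−α)(n+1)⌉-th smallest value among {ν(X_i, T̃_i) : i = 1, …, n} if ⌈(1−α)(n+1)⌉ ≤ n and q̂ = +∞ otherwise, and define the lower predictive bound LB̂ = inf{t ∈ ℝ : ν(X_{n+1}, t) ≤ q̂}. Then P(T_{n+1} ≥ LB̂) ≥ 1 − α. -/

import Mathlib

open MeasureTheory ProbabilityTheory

/-- The `k`-th smallest element (`k ≥ 1`) of a finite multiset of reals, as an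
extended real; equal to `+∞` when `k` exceeds the number of elements. -/
noncomputable def kthSmallest (s : Multiset ℝ) (k : ℕ) : EReal :=
  if k ≤ Multiset.card s then (((s.sort (· ≤ ·)).getD (k - 1) 0 : ℝ) : EReal) else ⊤

open scoped ENNReal NNReal




lemma sorted_getElem_mono {l : List ℝ} (hl : l.Pairwise (· ≤ ·)) {i j : ℕ}
    (hj : j < l.length) (hij : i ≤ j) : l[i]'(lt_of_le_of_lt hij hj) ≤ l[j] := by
  rcases eq_or_lt_of_le hij with rfl | h
  · exact le_rfl
  · exact List.pairwise_iff_getElem.1 hl i j _ hj h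

lemma sorted_countP_lt_getElem {l : List ℝ} (hl : l.Pairwise (· ≤ ·)) {m : ℕ} (hm : m < l.length) :
    l.countP (fun b => decide (b < l[m])) ≤ m := by
  have hdec : l = l.take m ++ l.drop m := (List.take_append_drop m l).symm
  have h0 : (l.drop m).countP (fun b => decide (b < l[m])) = 0 := by
    rw [List.countP_eq_zero]
    intro b hb
    obtain ⟨i, hi, rfl⟩ := List.mem_iff_getElem.1 hb
    rw [List.getElem_drop]
    have hmi : m + i < l.length := by
      have := hi; rw [List.length_drop] at this; omega
    have : l[m] ≤ l[m + i]'hmi :=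
      sorted_getElem_mono hl _ (Nat.le_add_right _ _)
    simpa using not_lt.2 this
  calc l.countP (fun b => decide (b < l[m]))
      = (l.take m).countP _ + (l.drop m).countP _ := by rw [← List.countP_append, ← hdec]
    _ ≤ (l.take m).length + 0 := by rw [h0]; exact Nat.add_le_add List.countP_le_length le_rfl
    _ ≤ m := by simp

lemma sorted_countP_gt_getElem {l : List ℝ} (hl : l.Pairwise (· ≤ ·)) {m : ℕ} (hm : m < l.length) :
    l.countP (fun b => decide (l[m] < b)) ≤ l.length - (m + 1) := by
  have hdec : l = l.take (m+1) ++ l.drop (m+1) := (List.take_append_drop (m+1) l).symm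
  have h0 : (l.take (m+1)).countP (fun b => decide (l[m] < b)) = 0 := by
    rw [List.countP_eq_zero]
    intro b hb
    obtain ⟨i, hi, rfl⟩ := List.mem_iff_getElem.1 hb
    rw [List.getElem_take]
    have hi' : i < l.length := lt_of_lt_of_le hi (by simp)
    have hile : i ≤ m := by
      have := hi; rw [List.length_take] at this
      omega
    have : l[i]'hi' ≤ l[m] := sorted_getElem_mono hl hm hile
    simpa using not_lt.2 this
  calc l.countP (fun b => decide (l[m] < b))
      = (l.take (m+1)).countP _ + (l.drop (m+1)).countP _ := by rw [← List.countP_append, ← hdec]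
    _ ≤ 0 + (l.drop (m+1)).length := by rw [h0]; exact Nat.add_le_add le_rfl List.countP_le_length
    _ ≤ l.length - (m+1) := by simp

lemma le_sorted_getD_of_countP_lt {s : Multiset ℝ} {k : ℕ} (hk1 : 1 ≤ k) (hk : k ≤ Multiset.card s)
    {a : ℝ} (h : Multiset.countP (fun b => b < a) s < k) :
    a ≤ (s.sort (· ≤ ·)).getD (k - 1) 0 := by
  set l := s.sort (· ≤ ·) with hl
  have hsort : l.Pairwise (· ≤ ·) := s.pairwise_sort _
  have hlen : l.length = Multiset.card s := s.length_sort _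
  have hm : k - 1 < l.length := by omega
  have hcount : Multiset.countP (fun b => b < a) s = l.countP (fun b => decide (b < a)) := by
    conv_lhs => rw [← Multiset.sort_eq s (· ≤ ·)]
    rw [Multiset.coe_countP]
  rw [List.getD_eq_getElem l 0 hm]
  by_contra hcon
  push_neg at hcon
  have hall : ∀ b ∈ l.take k, (fun b => decide (b < a)) b = true := by
    intro b hb
    obtain ⟨i, hi, rfl⟩ := List.mem_iff_getElem.1 hb
    rw [List.getElem_take]
    have hi' : i < l.length := lt_of_lt_of_le (by simpa using hi.trans_le (by simp)) le_rfl
    have hik : i ≤ k - 1 := by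
      rw [List.length_take] at hi; omega
    have : l[i]'(by omega) ≤ l[k-1] := sorted_getElem_mono hsort hm hik
    simpa using lt_of_le_of_lt this hcon
  have h1 : (l.take k).countP (fun b => decide (b < a)) = (l.take k).length :=
    List.countP_eq_length.2 hall
  have h2 : (l.take k).length = k := by rw [List.length_take]; omega
  have h3 : (l.take k).countP (fun b => decide (b < a)) ≤ l.countP (fun b => decide (b < a)) :=
    (List.take_sublist k l).countP_le
  omega

/-- the key deterministic counting bound -/
lemma card_high_rank_le {N : ℕ} (v : Fin N → ℝ) {k : ℕ} (hk1 : 1 ≤ k) (hk : k ≤ N) :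
    (Finset.univ.filter fun j =>
      k ≤ (Finset.univ.filter fun i => v i < v j).card).card ≤ N - k := by
  classical
  set s : Multiset ℝ := Finset.univ.val.map v with hs
  have hconv : ∀ (p : ℝ → Prop) [DecidablePred p],
      (Finset.univ.filter fun i => p (v i)).card = Multiset.countP p s := by
    intro p _
    rw [hs, Multiset.countP_map]
    rfl
  have hcard : Multiset.card s = N := by simp [hs]
  set l := s.sort (· ≤ ·) with hldef
  have hsort : l.Pairwise (· ≤ ·) := s.pairwise_sort _
  have hlen' : l.length = Multiset.card s := s.length_sort _
  have hlen : l.length = N := by omega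
  have hm : k - 1 < l.length := by omega
  set c := l[k-1] with hc
  have hcountlist : ∀ (p : ℝ → Prop) [DecidablePred p],
      Multiset.countP p s = l.countP (fun b => decide (p b)) := by
    intro p _
    conv_lhs => rw [← Multiset.sort_eq s (· ≤ ·)]
    rw [Multiset.coe_countP]
  have hlt : Multiset.countP (fun b => b < c) s ≤ k - 1 := by
    rw [hcountlist]; exact sorted_countP_lt_getElem hsort hm
  have hgt : Multiset.countP (fun b => c < b) s ≤ N - k := by
    rw [hcountlist, hc]
    have := sorted_countP_gt_getElem hsort hm
    omega
  have hsub : ∀ j, k ≤ (Finset.univ.filter fun i => v i < v j).card → c < v j := by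
    intro j hj
    by_contra hcon
    push_neg at hcon
    have hss : (Finset.univ.filter fun i => v i < v j) ⊆ (Finset.univ.filter fun i => v i < c) :=
      Finset.monotone_filter_right _ (fun i _ hi => lt_of_lt_of_le hi hcon)
    have h1 := Finset.card_le_card hss
    have h2 : (Finset.univ.filter fun i => v i < c).card
        = Multiset.countP (fun b => b < c) s := hconv (fun b => b < c)
    omega
  calc (Finset.univ.filter fun j => k ≤ (Finset.univ.filter fun i => v i < v j).card).card
      ≤ (Finset.univ.filter fun j => c < v j).card := by
        apply Finset.card_le_card
        exact Finset.monotone_filter_right _ (fun j _ => hsub j)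
    _ = Multiset.countP (fun b => c < b) s := hconv (fun b => c < b)
    _ ≤ N - k := hgt

open MeasureTheory ProbabilityTheory
open scoped ENNReal NNReal in
lemma map_fun_eq_pi {Ω : Type*} [MeasurableSpace Ω] (μ : Measure Ω) [IsProbabilityMeasure μ]
    {n : ℕ} (S : Fin (n + 1) → Ω → ℝ) (hS : ∀ i, Measurable (S i))
    (hind : iIndepFun S μ)
    (hid : ∀ i, IdentDistrib (S i) (S 0) μ μ) :
    Measure.map (fun ω i => S i ω) μ = Measure.pi (fun _ => Measure.map (S 0) μ) := by
  haveI : IsProbabilityMeasure (Measure.map (S 0) μ) :=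
    Measure.isProbabilityMeasure_map (hS 0).aemeasurable
  refine (Measure.pi_eq fun s hs => ?_).symm
  rw [Measure.map_apply (measurable_pi_lambda _ hS) (MeasurableSet.univ_pi hs)]
  have hpre : (fun ω i => S i ω) ⁻¹' Set.pi Set.univ s = ⋂ i ∈ Finset.univ, S i ⁻¹' s i := by
    ext ω; simp [Set.mem_univ_pi]
  rw [hpre, hind.measure_inter_preimage_eq_mul Finset.univ (fun i _ => hs i)]
  refine Finset.prod_congr rfl fun i _ => ?_
  rw [← Measure.map_apply (hS i) (hs i), (hid i).map_eq]

/-- **Validity of the naive conformal lower predictive bound.**  The triples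
`(X i, T i, C i)`, `i = 0, …, n`, are i.i.d. (calibration indices are `Fin n` via
`Fin.castSucc`, the test index is `Fin.last n`); `T̃ᵢ = min(Tᵢ, Cᵢ)` is the
censored survival time.  Let `ν` be a measurable score, nonincreasing in its
second argument, let `q̂` be the `⌈(1-α)(n+1)⌉`-th smallest of the calibration
scores `{ν(Xᵢ, T̃ᵢ) : i ≤ n}` (`+∞` if `⌈(1-α)(n+1)⌉ > n`), and let
`LB̂ = inf {t : ν(X_{n+1}, t) ≤ q̂}` (an extended real, the infimum over `ℝ`
being taken in `EReal`).  Then `P(T_{n+1} ≥ LB̂) ≥ 1 - α`. -/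
theorem naive_lower_bound_valid
    {Ω : Type*} [MeasurableSpace Ω] (μ : Measure Ω) [IsProbabilityMeasure μ]
    {𝒳 : Type*} [MeasurableSpace 𝒳]
    (n : ℕ) (X : Fin (n + 1) → Ω → 𝒳) (T C : Fin (n + 1) → Ω → ℝ)
    (hmeas : ∀ i, Measurable (fun ω => (X i ω, T i ω, C i ω)))
    (hindep : iIndepFun
      (fun i ω => (X i ω, T i ω, C i ω)) μ)
    (hident : ∀ i, IdentDistrib (fun ω => (X i ω, T i ω, C i ω))
      (fun ω => (X 0 ω, T 0 ω, C 0 ω)) μ μ)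
    (ν : 𝒳 → ℝ → ℝ) (hν : Measurable (Function.uncurry ν))
    (hanti : ∀ x, Antitone (ν x))
    (α : ℝ) (hα0 : 0 < α) (hα1 : α < 1)
    (qhat : Ω → EReal)
    (hqhat : ∀ ω, qhat ω =
      kthSmallest
        (Finset.univ.val.map
          (fun i : Fin n => ν (X i.castSucc ω) (min (T i.castSucc ω) (C i.castSucc ω))))
        ⌈(1 - α) * ((n : ℝ) + 1)⌉₊)
    (LB : Ω → EReal)
    (hLB : ∀ ω, LB ω = sInf ((fun t : ℝ => (t : EReal)) ''
      {t : ℝ | (ν (X (Fin.last n) ω) t : EReal) ≤ qhat ω})) :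
    ENNReal.ofReal (1 - α) ≤ μ {ω | LB ω ≤ (T (Fin.last n) ω : EReal)} := by
  classical
  set k : ℕ := ⌈(1 - α) * ((n : ℝ) + 1)⌉₊ with hkdef
  have hk1 : 1 ≤ k := Nat.one_le_iff_ne_zero.2 (by
    rw [hkdef, ← Nat.pos_iff_ne_zero, Nat.ceil_pos]
    have h1α : (0:ℝ) < 1 - α := by linarith
    positivity)
  have hkN : k ≤ n + 1 := by
    rw [hkdef]
    refine Nat.ceil_le.2 ?_
    push_cast
    nlinarith [hα0.le, Nat.cast_nonneg (α := ℝ) n]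
  -- the scores
  set S : Fin (n + 1) → Ω → ℝ := fun i ω => ν (X i ω) (min (T i ω) (C i ω)) with hSdef
  have hg : Measurable (fun p : 𝒳 × ℝ × ℝ => ν p.1 (min p.2.1 p.2.2)) :=
    hν.comp (measurable_fst.prodMk
      ((measurable_fst.comp measurable_snd).min (measurable_snd.comp measurable_snd)))
  have hSmeas : ∀ i, Measurable (S i) := fun i => hg.comp (hmeas i)
  have hSind : iIndepFun S μ :=
    hindep.comp (fun _ p => ν p.1 (min p.2.1 p.2.2)) (fun _ => hg)
  have hSid : ∀ i, IdentDistrib (S i) (S 0) μ μ := fun i => (hident i).comp hg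
  -- the joint law is a product measure
  set m0 : Measure ℝ := Measure.map (S 0) μ with hm0
  haveI : IsProbabilityMeasure m0 := Measure.isProbabilityMeasure_map (hSmeas 0).aemeasurable
  set F : Ω → (Fin (n + 1) → ℝ) := fun ω i => S i ω with hFdef
  have hF : Measurable F := measurable_pi_lambda _ hSmeas
  have hmapF : Measure.map F μ = Measure.pi (fun _ => m0) :=
    map_fun_eq_pi μ S hSmeas hSind hSid
  -- the "rank at least k" events
  set A : Fin (n + 1) → Set (Fin (n + 1) → ℝ) := fun j =>
    {v | k ≤ (Finset.univ.filter fun i => v i < v j).card} with hAdef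
  have hAmeas : ∀ j, MeasurableSet (A j) := by
    intro j
    have hmc : Measurable fun v : Fin (n + 1) → ℝ =>
        (Finset.univ.filter fun i => v i < v j).card := by
      have hrw : (fun v : Fin (n + 1) → ℝ => (Finset.univ.filter fun i => v i < v j).card)
          = fun v => ∑ i : Fin (n + 1), if v i < v j then 1 else 0 :=
        funext fun v => Finset.card_filter _ _
      rw [hrw]
      exact Finset.measurable_sum _ fun i _ => Measurable.ite
        (measurableSet_lt (measurable_pi_apply i) (measurable_pi_apply j))
        measurable_const measurable_const
    exact hmc measurableSet_Ici
  set Ev : Fin (n + 1) → Set Ω := fun j =>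
    {ω | k ≤ (Finset.univ.filter fun i => S i ω < S j ω).card} with hEvdef
  have hEvpre : ∀ j, Ev j = F ⁻¹' A j := fun j => rfl
  have hEvmeas : ∀ j, MeasurableSet (Ev j) := fun j => (hEvpre j) ▸ hF (hAmeas j)
  have hEvμ : ∀ j, μ (Ev j) = (Measure.pi fun _ : Fin (n + 1) => m0) (A j) := by
    intro j
    rw [hEvpre j, ← hmapF, Measure.map_apply hF (hAmeas j)]
  -- exchangeability: all the events have the same probability
  have hAeq : ∀ j, (Measure.pi fun _ : Fin (n + 1) => m0) (A j)
      = (Measure.pi fun _ : Fin (n + 1) => m0) (A (Fin.last n)) := by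
    intro j
    set e : Fin (n + 1) ≃ Fin (n + 1) := Equiv.swap j (Fin.last n) with hedef
    have mp := measurePreserving_piCongrLeft (fun _ : Fin (n + 1) => m0) e
    have hev : ∀ (w : Fin (n + 1) → ℝ) (b : Fin (n + 1)),
        (MeasurableEquiv.piCongrLeft (fun _ => ℝ) e) w b = w (e.symm b) := by
      intro w b
      have h1 := Equiv.piCongrLeft_apply_apply (fun _ => ℝ) e w (e.symm b)
      rw [MeasurableEquiv.coe_piCongrLeft]
      rw [Equiv.apply_symm_apply] at h1
      exact h1
    have hpre : (MeasurableEquiv.piCongrLeft (fun _ => ℝ) e) ⁻¹' (A (Fin.last n)) = A j := by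
      ext v
      simp only [hAdef, Set.mem_preimage, Set.mem_setOf_eq]
      have hsymm : e.symm = e := by rw [hedef, Equiv.symm_swap]
      have hlast : e (Fin.last n) = j := by rw [hedef, Equiv.swap_apply_right]
      have hcardeq : (Finset.univ.filter fun i =>
          (MeasurableEquiv.piCongrLeft (fun _ => ℝ) e) v i
            < (MeasurableEquiv.piCongrLeft (fun _ => ℝ) e) v (Fin.last n)).card
          = (Finset.univ.filter fun i => v i < v j).card := by
        rw [Finset.card_filter, Finset.card_filter]
        refine Fintype.sum_equiv e _ _ fun i => ?_
        rw [hev, hev, hsymm, hlast]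
      rw [hcardeq]
    calc (Measure.pi fun _ : Fin (n + 1) => m0) (A j)
        = (Measure.pi fun _ : Fin (n + 1) => m0)
            ((MeasurableEquiv.piCongrLeft (fun _ => ℝ) e) ⁻¹' (A (Fin.last n))) := by rw [hpre]
      _ = (Measure.pi fun _ : Fin (n + 1) => m0) (A (Fin.last n)) :=
          mp.measure_preimage_equiv _
  have hEvconst : ∀ j, μ (Ev j) = μ (Ev (Fin.last n)) := by
    intro j; rw [hEvμ j, hEvμ (Fin.last n), hAeq j]
  -- the pointwise counting bound
  have hptw : ∀ ω, ∑ j : Fin (n + 1), (Ev j).indicator (1 : Ω → ℝ≥0∞) ω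
      ≤ ((n + 1 - k : ℕ) : ℝ≥0∞) := by
    intro ω
    have h1 : ∑ j : Fin (n + 1), (Ev j).indicator (1 : Ω → ℝ≥0∞) ω
        = ((Finset.univ.filter fun j : Fin (n + 1) => ω ∈ Ev j).card : ℝ≥0∞) := by
      rw [Finset.card_filter]
      push_cast
      refine Finset.sum_congr rfl fun j _ => ?_
      by_cases h : ω ∈ Ev j <;> simp [Set.indicator, h]
    rw [h1]
    have hb := card_high_rank_le (fun i => S i ω) hk1 hkN
    have h2 : (Finset.univ.filter fun j : Fin (n + 1) => ω ∈ Ev j)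
        = (Finset.univ.filter fun j => k ≤ (Finset.univ.filter
            fun i => S i ω < S j ω).card) := by
      refine Finset.filter_congr fun j _ => ?_
      simp only [hEvdef, Set.mem_setOf_eq]
    rw [h2]
    exact_mod_cast hb
  -- summing up
  have hsum : ∑ j : Fin (n + 1), μ (Ev j) ≤ ((n + 1 - k : ℕ) : ℝ≥0∞) := by
    have h1 : ∑ j : Fin (n + 1), μ (Ev j)
        = ∫⁻ ω, ∑ j : Fin (n + 1), (Ev j).indicator (1 : Ω → ℝ≥0∞) ω ∂μ := by
      rw [lintegral_finset_sum _ fun j _ => measurable_one.indicator (hEvmeas j)]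
      exact Finset.sum_congr rfl fun j _ => (lintegral_indicator_one (hEvmeas j)).symm
    rw [h1]
    calc ∫⁻ ω, ∑ j : Fin (n + 1), (Ev j).indicator (1 : Ω → ℝ≥0∞) ω ∂μ
        ≤ ∫⁻ _, ((n + 1 - k : ℕ) : ℝ≥0∞) ∂μ := lintegral_mono hptw
      _ = ((n + 1 - k : ℕ) : ℝ≥0∞) := by rw [lintegral_const, measure_univ, mul_one]
  have hEvlast : μ (Ev (Fin.last n)) ≤ ENNReal.ofReal α := by
    have h1 : ((n + 1 : ℕ) : ℝ≥0∞) * μ (Ev (Fin.last n)) ≤ ((n + 1 - k : ℕ) : ℝ≥0∞) := by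
      calc ((n + 1 : ℕ) : ℝ≥0∞) * μ (Ev (Fin.last n))
          = ∑ _j : Fin (n + 1), μ (Ev (Fin.last n)) := by
            rw [Finset.sum_const, Finset.card_univ, Fintype.card_fin, nsmul_eq_mul]
        _ = ∑ j : Fin (n + 1), μ (Ev j) :=
            (Finset.sum_congr rfl fun j _ => (hEvconst j).symm)
        _ ≤ ((n + 1 - k : ℕ) : ℝ≥0∞) := hsum
    have h2 : ((n + 1 - k : ℕ) : ℝ≥0∞) ≤ ENNReal.ofReal α * ((n + 1 : ℕ) : ℝ≥0∞) := by
      have hceil : (1 - α) * ((n : ℝ) + 1) ≤ k := Nat.le_ceil _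
      have hr : ((n + 1 - k : ℕ) : ℝ) ≤ α * ((n + 1 : ℕ) : ℝ) := by
        rw [Nat.cast_sub hkN]
        push_cast
        nlinarith
      calc ((n + 1 - k : ℕ) : ℝ≥0∞) = ENNReal.ofReal ((n + 1 - k : ℕ) : ℝ) := by
            rw [ENNReal.ofReal_natCast]
        _ ≤ ENNReal.ofReal (α * ((n + 1 : ℕ) : ℝ)) := ENNReal.ofReal_le_ofReal hr
        _ = ENNReal.ofReal α * ENNReal.ofReal ((n + 1 : ℕ) : ℝ) :=
            ENNReal.ofReal_mul hα0.le
        _ = ENNReal.ofReal α * ((n + 1 : ℕ) : ℝ≥0∞) := by rw [ENNReal.ofReal_natCast]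
    have h3 : μ (Ev (Fin.last n)) * ((n + 1 : ℕ) : ℝ≥0∞)
        ≤ ENNReal.ofReal α * ((n + 1 : ℕ) : ℝ≥0∞) := by
      rw [mul_comm]
      exact le_trans h1 h2
    exact (ENNReal.mul_le_mul_iff_left (Nat.cast_ne_zero.2 (Nat.succ_ne_zero n))
      (ENNReal.natCast_ne_top _)).1 h3
  -- complement bound
  have hcompl : ENNReal.ofReal (1 - α) ≤ μ ((Ev (Fin.last n))ᶜ) := by
    rw [prob_compl_eq_one_sub (hEvmeas _)]
    have h1 : ENNReal.ofReal (1 - α) = 1 - ENNReal.ofReal α := by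
      rw [ENNReal.ofReal_sub _ hα0.le, ENNReal.ofReal_one]
    rw [h1]
    exact tsub_le_tsub_left hEvlast 1
  -- inclusion in the target event
  have hincl : (Ev (Fin.last n))ᶜ ⊆ {ω | LB ω ≤ (T (Fin.last n) ω : EReal)} := by
    intro ω hω
    simp only [hEvdef, Set.mem_compl_iff, Set.mem_setOf_eq, not_le] at hω
    -- reduce the count over `Fin (n+1)` to the calibration count over `Fin n`
    have hsplit : (Finset.univ.filter fun i : Fin (n + 1) => S i ω < S (Fin.last n) ω).card
        = (Finset.univ.filter fun i : Fin n => S i.castSucc ω < S (Fin.last n) ω).card := by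
      rw [Finset.card_filter, Finset.card_filter, Fin.sum_univ_castSucc]
      simp [lt_irrefl]
    rw [hsplit] at hω
    -- the test score is at most the quantile
    have hSq : ((S (Fin.last n) ω : ℝ) : EReal) ≤ qhat ω := by
      rw [hqhat, kthSmallest]
      set s : Multiset ℝ := Finset.univ.val.map
        (fun i : Fin n => ν (X i.castSucc ω) (min (T i.castSucc ω) (C i.castSucc ω))) with hsdef
      have hscard : Multiset.card s = n := by simp [hsdef]
      split_ifs with hcase
      · rw [EReal.coe_le_coe_iff]
        refine le_sorted_getD_of_countP_lt hk1 (by omega) ?_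
        have hc : Multiset.countP (fun b => b < S (Fin.last n) ω) s
            = (Finset.univ.filter fun i : Fin n =>
                S i.castSucc ω < S (Fin.last n) ω).card := by
          rw [hsdef, Multiset.countP_map]
          rfl
        omega
      · exact le_top
    show LB ω ≤ (T (Fin.last n) ω : EReal)
    rw [hLB ω]
    have hmem : ((min (T (Fin.last n) ω) (C (Fin.last n) ω) : ℝ) : EReal)
        ∈ (fun t : ℝ => (t : EReal)) ''
          {t : ℝ | (ν (X (Fin.last n) ω) t : EReal) ≤ qhat ω} :=
      ⟨min (T (Fin.last n) ω) (C (Fin.last n) ω), hSq, rfl⟩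
    exact le_trans (sInf_le hmem) (EReal.coe_le_coe_iff.2 (min_le_left _ _))
  exact le_trans hcompl (measure_mono hincl)
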